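/- Let H : (0,∞) → [0,∞) satisfy s·H(t+s) ≤ A^{1/n} H(t)^{1+ε} for all t > 0 and all s ∈ [0,1], where A > 0, ε > 0, n ≥ 1, and H is right-continuous, non-increasing with H(t) → 0 as t → ∞. Then there exists a finite T₀ (depending only on A, ε, n and H at some initial point) such that H(t) = 0 for all t ≥ T₀. -/

import Mathlib

open Set

/-- De Giorgi-type iteration lemma: if `H : (0,∞) → [0,∞)` is non-increasing,
right-continuous, tends to `0` at infinity and satisfies
`s·H(t+s) ≤ A^{1/n} H(t)^{1+ε}` for all `t > 0`, `s ∈ [0,1]`, then `H` vanishes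
beyond some finite threshold `T₀`. -/
theorem stmt16 (n : ℕ) (hn : 1 ≤ n) (A ε : ℝ) (hA : 0 < A) (hε : 0 < ε)
    (H : ℝ → ℝ) (hnonneg : ∀ t, 0 < t → 0 ≤ H t)
    (hmono : ∀ t₁ t₂, 0 < t₁ → t₁ ≤ t₂ → H t₂ ≤ H t₁)
    (hrc : ∀ t, 0 < t → ContinuousWithinAt H (Ici t) t)
    (hlim : Filter.Tendsto H Filter.atTop (nhds 0))
    (hiter : ∀ t, 0 < t → ∀ s ∈ Icc (0 : ℝ) 1,
      s * H (t + s) ≤ A ^ (1 / (n : ℝ)) * H t ^ (1 + ε)) :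
    ∃ T₀ : ℝ, ∀ t, T₀ ≤ t → H t = 0 := by
  set B := A ^ (1 / (n : ℝ)) with hB
  have hBpos : 0 < B := Real.rpow_pos_of_pos hA _
  set r : ℝ := (2 : ℝ) ^ (-(1 / ε)) with hr
  have hrpos : 0 < r := Real.rpow_pos_of_pos two_pos _
  have hrlt : r < 1 := by
    apply Real.rpow_lt_one_of_one_lt_of_neg one_lt_two
    simp [one_div, inv_pos, hε]
  have hre : r ^ ε = 2⁻¹ := by
    rw [hr, ← Real.rpow_mul (by norm_num : (0:ℝ) ≤ 2),
      show -(1/ε) * ε = -1 by field_simp, Real.rpow_neg_one]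
  -- find t₀
  have hg : Filter.Tendsto (fun t => B * H t ^ ε) Filter.atTop (nhds 0) := by
    have := (hlim.rpow_const (Or.inr hε.le)).const_mul B
    simpa [Real.zero_rpow hε.ne'] using this
  obtain ⟨t₀, ht₀, ht₀1⟩ :=
    ((hg.eventually_lt_const hrpos).and (Filter.eventually_ge_atTop (1:ℝ))).exists
  set c := H t₀ with hc
  have ht₀pos : (0:ℝ) < t₀ := lt_of_lt_of_le one_pos ht₀1
  have hcnn : 0 ≤ c := hnonneg t₀ ht₀pos
  have hBc : B * c ^ ε ≤ r := ht₀.le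
  -- the sequence tⱼ = t₀ + 2 - 2·(1/2)ʲ
  have htjpos : ∀ j : ℕ, 0 < t₀ + 2 - 2 * (2⁻¹ : ℝ) ^ j := by
    intro j
    have h1 : (2⁻¹ : ℝ) ^ j ≤ 1 := pow_le_one₀ (by norm_num) (by norm_num)
    nlinarith
  have key : ∀ j : ℕ, H (t₀ + 2 - 2 * (2⁻¹ : ℝ) ^ j) ≤ c * r ^ j := by
    intro j
    induction j with
    | zero => simp [hc]
    | succ j ih =>
      set tj := t₀ + 2 - 2 * (2⁻¹ : ℝ) ^ j with htj
      have hs0 : (0:ℝ) ≤ (2⁻¹ : ℝ) ^ j := by positivity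
      have hs1 : (2⁻¹ : ℝ) ^ j ≤ 1 := pow_le_one₀ (by norm_num) (by norm_num)
      have hstep : t₀ + 2 - 2 * (2⁻¹ : ℝ) ^ (j + 1) = tj + (2⁻¹ : ℝ) ^ j := by
        rw [htj]; ring
      have hiterj := hiter tj (htjpos j) ((2⁻¹:ℝ)^j) ⟨hs0, hs1⟩
      rw [← hstep] at hiterj
      have hHnn : 0 ≤ H tj := hnonneg tj (htjpos j)
      have hHnn' : 0 ≤ H (t₀ + 2 - 2 * (2⁻¹ : ℝ) ^ (j+1)) :=
        hnonneg _ (htjpos (j+1))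
      -- divide by the step
      have h1 : H (t₀ + 2 - 2 * (2⁻¹ : ℝ) ^ (j + 1)) ≤
          (2:ℝ)^j * (B * H tj ^ (1 + ε)) := by
        have h2 : ((2:ℝ)^j * (2⁻¹:ℝ)^j) = 1 := by
          rw [← mul_pow]; norm_num
        calc H (t₀ + 2 - 2 * (2⁻¹ : ℝ) ^ (j + 1))
            = (2:ℝ)^j * ((2⁻¹:ℝ)^j * H (t₀ + 2 - 2 * (2⁻¹ : ℝ) ^ (j + 1))) := by
              rw [← mul_assoc, h2, one_mul]
          _ ≤ (2:ℝ)^j * (B * H tj ^ (1 + ε)) := by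
              apply mul_le_mul_of_nonneg_left hiterj (by positivity)
      have h2 : H tj ^ (1 + ε) ≤ (c * r ^ j) ^ (1 + ε) :=
        Real.rpow_le_rpow hHnn ih (by positivity)
      have h3 : (c * r ^ j) ^ (1 + ε) = (c * c ^ ε) * (r ^ j * (2⁻¹:ℝ) ^ j) := by
        rw [Real.mul_rpow hcnn (by positivity)]
        congr 1
        · rw [Real.rpow_add' hcnn (by positivity), Real.rpow_one]
        · rw [← Real.rpow_natCast r j, ← Real.rpow_mul hrpos.le,
            show (j:ℝ) * (1 + ε) = (j:ℝ) + ε * (j:ℝ) by ring,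
            Real.rpow_add hrpos, Real.rpow_mul hrpos.le, hre,
            Real.rpow_natCast, Real.rpow_natCast]
      calc H (t₀ + 2 - 2 * (2⁻¹ : ℝ) ^ (j + 1))
          ≤ (2:ℝ)^j * (B * H tj ^ (1 + ε)) := h1
        _ ≤ (2:ℝ)^j * (B * ((c * c ^ ε) * (r ^ j * (2⁻¹:ℝ) ^ j))) := by
            rw [← h3]
            apply mul_le_mul_of_nonneg_left (mul_le_mul_of_nonneg_left h2 hBpos.le)
              (by positivity)
        _ = (B * c ^ ε) * (c * r ^ j) * ((2:ℝ)^j * (2⁻¹:ℝ)^j) := by ring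
        _ = (B * c ^ ε) * (c * r ^ j) := by
            rw [← mul_pow]; norm_num
        _ ≤ r * (c * r ^ j) := by
            apply mul_le_mul_of_nonneg_right hBc (by positivity)
        _ = c * r ^ (j + 1) := by ring
  refine ⟨t₀ + 2, fun t ht => ?_⟩
  have htpos : 0 < t := lt_of_lt_of_le (by linarith) ht
  have hle : ∀ j : ℕ, H t ≤ c * r ^ j := by
    intro j
    refine le_trans (hmono _ _ (htjpos j) ?_) (key j)
    have : (0:ℝ) ≤ (2⁻¹ : ℝ) ^ j := by positivity
    nlinarith
  have hlim2 : Filter.Tendsto (fun j : ℕ => c * r ^ j) Filter.atTop (nhds 0) := by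
    simpa using (tendsto_pow_atTop_nhds_zero_of_lt_one hrpos.le hrlt).const_mul c
  have : H t ≤ 0 := ge_of_tendsto hlim2 (Filter.Eventually.of_forall hle)
  linarith [hnonneg t htpos]
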